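/- Let a, σ² ≥ 0, χ > 0, K > 0, λ₀ ∈ (0,1], and let N : (0,∞) → [0,∞) and D : (0,∞) → ℝ be functions such that: (i) for every λ > 0, ∫₀^∞ e^{−λt} · t · D(t) dt = λ^{−2}( a + 2χ N(λ) ) (the integral being finite); (ii) ∫₀^∞ e^{−λt} · t · D(t) dt ≤ K λ^{−7/3} for all λ ∈ (0, λ₀]; and (iii) D(t) ≤ σ² + 12 χ N(1/t) for all t ≥ 1. Then there exists a constant C < ∞ such that D(t) ≤ C t^{1/3} for all t ≥ 1. -/
import Mathlib


open MeasureTheory Real Set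

/-- Proof skeleton of Theorem 5: from the Laplace-transformed Green–Kubo identity (i),
the Tauberian upper bound (ii), and the Lemma 1 bound (iii), the pointwise diffusivity
bound `D(t) ≤ C t^{1/3}` for `t ≥ 1` follows. -/
theorem stmt9 (a σsq χ K lam₀ : ℝ) (ha : 0 ≤ a) (hσ : 0 ≤ σsq) (hχ : 0 < χ) (hK : 0 < K)
    (hlam₀ : lam₀ ∈ Ioc (0:ℝ) 1)
    (N D : ℝ → ℝ) (hN : ∀ lam, 0 < lam → 0 ≤ N lam)
    (hint : ∀ lam, 0 < lam →
      Integrable (fun t => exp (-lam * t) * t * D t) (volume.restrict (Ioi 0)))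
    (h1 : ∀ lam, 0 < lam →
      ∫ t in Ioi (0:ℝ), exp (-lam * t) * t * D t = lam⁻¹ ^ 2 * (a + 2 * χ * N lam))
    (h2 : ∀ lam ∈ Ioc (0:ℝ) lam₀,
      ∫ t in Ioi (0:ℝ), exp (-lam * t) * t * D t ≤ K * lam ^ (-(7:ℝ)/3))
    (h3 : ∀ t, 1 ≤ t → D t ≤ σsq + 12 * χ * N t⁻¹) :
    ∃ C : ℝ, ∀ t, 1 ≤ t → D t ≤ C * t ^ ((1:ℝ)/3) := by
  obtain ⟨hlam₀pos, hlam₀le⟩ := hlam₀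
  set M := ∫ s in Ioi (0:ℝ), exp (-lam₀ * s) * s * |D s| with hMdef
  have Mint : Integrable (fun s => exp (-lam₀ * s) * s * |D s|)
      (volume.restrict (Ioi 0)) := by
    refine ((hint lam₀ hlam₀pos).abs).congr ?_
    filter_upwards [ae_restrict_mem measurableSet_Ioi] with s hs
    rw [abs_mul, abs_mul, abs_of_pos (exp_pos _), abs_of_pos (mem_Ioi.mp hs)]
  have hM0 : 0 ≤ M := by
    refine setIntegral_nonneg measurableSet_Ioi fun s hs => ?_
    have := (exp_pos (-lam₀ * s)).le
    have hs' := (mem_Ioi.mp hs).le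
    positivity
  refine ⟨σsq + 6 * M + 6 * K, fun t ht => ?_⟩
  have ht0 : (0:ℝ) < t := lt_of_lt_of_le one_pos ht
  have hlpos : 0 < t⁻¹ := inv_pos.mpr ht0
  have htpow : 1 ≤ t ^ ((1:ℝ)/3) := Real.one_le_rpow ht (by norm_num)
  have hD := h3 t ht
  rcases le_or_gt t⁻¹ lam₀ with hcase | hcase
  · -- small lambda regime: use Tauberian bound h2
    have h := h2 t⁻¹ ⟨hlpos, hcase⟩
    rw [h1 t⁻¹ hlpos, inv_inv] at h
    have hrw : (t⁻¹) ^ (-(7:ℝ)/3) = t ^ 2 * t ^ ((1:ℝ)/3) := by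
      rw [← Real.rpow_natCast t 2, ← Real.rpow_add ht0,
        Real.inv_rpow ht0.le, ← Real.rpow_neg ht0.le]
      norm_num
    rw [hrw] at h
    have hkey : a + 2 * χ * N t⁻¹ ≤ K * t ^ ((1:ℝ)/3) := by
      have ht2 : (0:ℝ) < t ^ 2 := by positivity
      nlinarith [h]
    have hNb : 12 * χ * N t⁻¹ ≤ 6 * K * t ^ ((1:ℝ)/3) := by nlinarith
    nlinarith [hD, hM0]
  · -- mid regime: lambda in mid range
    have hmono : ∫ s in Ioi (0:ℝ), exp (-t⁻¹ * s) * s * D s ≤ M := by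
      refine setIntegral_mono_on (hint t⁻¹ hlpos) Mint measurableSet_Ioi fun s hs => ?_
      have hs0 : 0 < s := mem_Ioi.mp hs
      have e1 : exp (-t⁻¹ * s) ≤ exp (-lam₀ * s) :=
        exp_le_exp.mpr (by nlinarith)
      have e2 : D s ≤ |D s| := le_abs_self _
      have e3 : (0:ℝ) ≤ |D s| := abs_nonneg _
      calc exp (-t⁻¹ * s) * s * D s
          ≤ exp (-t⁻¹ * s) * s * |D s| := by
            have := mul_le_mul_of_nonneg_left e2
              (mul_nonneg (exp_pos (-t⁻¹ * s)).le hs0.le)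
            linarith [this]
        _ ≤ exp (-lam₀ * s) * s * |D s| :=
            mul_le_mul_of_nonneg_right (mul_le_mul_of_nonneg_right e1 hs0.le) e3
    rw [h1 t⁻¹ hlpos, inv_inv] at hmono
    have hpos : 0 ≤ a + 2 * χ * N t⁻¹ := by
      have := hN t⁻¹ hlpos; nlinarith
    have hkey : a + 2 * χ * N t⁻¹ ≤ M := by
      have ht2 : (1:ℝ) ≤ t ^ 2 := by nlinarith
      have := mul_le_mul_of_nonneg_right ht2 hpos
      linarith
    have hNb : 12 * χ * N t⁻¹ ≤ 6 * M := by nlinarith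
    nlinarith [hD, hK.le]
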